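/- Let Δ₂ ⊂ ℝ² be the triangle with vertices (0,0), (5/2,5√3/6), (0,5√3/3), and μ the measure with density x²(−x/2+√3y/2)²(x/2+√3y/2)². Then the barycenter of Δ₂ with respect to μ equals (10/9, 10√3/9). -/

import Mathlib

open MeasureTheory Real Set

noncomputable def dens (p : ℝ × ℝ) : ℝ :=
  (p.1 * (-p.1 / 2 + Real.sqrt 3 * p.2 / 2) * (p.1 / 2 + Real.sqrt 3 * p.2 / 2)) ^ 2

noncomputable def Tset : Set (ℝ × ℝ) :=
  {p | 0 ≤ p.1 ∧ sqrt 3 / 3 * p.1 ≤ p.2 ∧ p.2 ≤ 5 * sqrt 3 / 3 - sqrt 3 / 3 * p.1}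

lemma hs3 : Real.sqrt 3 ^ 2 = 3 := Real.sq_sqrt (by norm_num)
lemma hs0 : (0:ℝ) < Real.sqrt 3 := Real.sqrt_pos.2 (by norm_num)

lemma ipoly (a b c0 c1 c2 c3 c4 c5 c6 c7 c8 : ℝ) :
    (∫ t in a..b, (c0 + c1*t + c2*t^2 + c3*t^3 + c4*t^4 + c5*t^5 + c6*t^6 + c7*t^7 + c8*t^8)) =
    (c0*b + c1*b^2/2 + c2*b^3/3 + c3*b^4/4 + c4*b^5/5 + c5*b^6/6 + c6*b^7/7 + c7*b^8/8 + c8*b^9/9)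
    - (c0*a + c1*a^2/2 + c2*a^3/3 + c3*a^4/4 + c4*a^5/5 + c5*a^6/6 + c6*a^7/7 + c7*a^8/8 + c8*a^9/9) := by
  have hF : ∀ t : ℝ, HasDerivAt
      (fun t : ℝ => c0*t^1 + (c1/2)*t^2 + (c2/3)*t^3 + (c3/4)*t^4 + (c4/5)*t^5 + (c5/6)*t^6
        + (c6/7)*t^7 + (c7/8)*t^8 + (c8/9)*t^9)
      (c0 + c1*t + c2*t^2 + c3*t^3 + c4*t^4 + c5*t^5 + c6*t^6 + c7*t^7 + c8*t^8) t := by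
    intro t
    have H := (((hasDerivAt_pow 1 t).const_mul c0).add ((hasDerivAt_pow 2 t).const_mul (c1/2))).add
      (((((hasDerivAt_pow 3 t).const_mul (c2/3)).add ((hasDerivAt_pow 4 t).const_mul (c3/4))).add
        (((hasDerivAt_pow 5 t).const_mul (c4/5)).add ((hasDerivAt_pow 6 t).const_mul (c5/6)))).add
        ((((hasDerivAt_pow 7 t).const_mul (c6/7)).add ((hasDerivAt_pow 8 t).const_mul (c7/8))).add
          ((hasDerivAt_pow 9 t).const_mul (c8/9))))
    convert H using 1
    · rfl
    · rfl
    · funext x; simp only [Pi.add_apply]; ring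
    · push_cast; ring
  rw [intervalIntegral.integral_eq_sub_of_hasDerivAt (fun t _ => hF t)
    (Continuous.intervalIntegrable (by fun_prop) _ _)]
  ring

lemma hullEq :
    (convexHull ℝ {((0:ℝ), (0:ℝ)), (5/2, 5 * Real.sqrt 3 / 6), (0, 5 * Real.sqrt 3 / 3)} : Set (ℝ × ℝ))
      = Tset := by
  have hs : Real.sqrt 3 ^ 2 = 3 := hs3
  have h0 : (0:ℝ) < Real.sqrt 3 := hs0
  apply Subset.antisymm
  · apply convexHull_min
    · intro p hp
      simp only [mem_insert_iff, mem_singleton_iff] at hp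
      rcases hp with rfl | rfl | rfl <;>
        · simp only [Tset, mem_setOf_eq]
          refine ⟨by norm_num, by nlinarith, by nlinarith⟩
    · have h1 : Convex ℝ {p : ℝ × ℝ | 0 ≤ p.1} :=
        convex_halfSpace_ge (⟨fun _ _ => rfl, fun _ _ => rfl⟩ : IsLinearMap ℝ (Prod.fst : ℝ × ℝ → ℝ)) 0
      have h2 : Convex ℝ {p : ℝ × ℝ | 0 ≤ p.2 - Real.sqrt 3 / 3 * p.1} :=
        convex_halfSpace_ge ⟨fun a b => by simp; ring, fun c a => by simp; ring⟩ 0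
      have h3 : Convex ℝ {p : ℝ × ℝ | p.2 + Real.sqrt 3 / 3 * p.1 ≤ 5 * Real.sqrt 3 / 3} :=
        convex_halfSpace_le ⟨fun a b => by simp; ring, fun c a => by simp; ring⟩ _
      have hT : Tset = {p : ℝ × ℝ | 0 ≤ p.1} ∩ ({p | 0 ≤ p.2 - Real.sqrt 3 / 3 * p.1}
          ∩ {p | p.2 + Real.sqrt 3 / 3 * p.1 ≤ 5 * Real.sqrt 3 / 3}) := by
        ext p; simp only [Tset, mem_setOf_eq, mem_inter_iff]
        constructor
        · rintro ⟨a, b, c⟩; exact ⟨a, by linarith, by linarith⟩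
        · rintro ⟨a, b, c⟩; exact ⟨a, by linarith, by linarith⟩
      rw [hT]
      exact h1.inter (h2.inter h3)
  · rintro ⟨x, y⟩ ⟨h1, h2, h3⟩
    simp only [Tset, mem_setOf_eq] at h1 h2 h3
    have hl2n : (0:ℝ) ≤ 2 * x / 5 := by positivity
    have hl3n : (0:ℝ) ≤ (Real.sqrt 3 * y - x) / 5 := by nlinarith
    have hl1n : (0:ℝ) ≤ 1 - (2 * x / 5 + (Real.sqrt 3 * y - x) / 5) := by nlinarith
    set H := (convexHull ℝ {((0:ℝ), (0:ℝ)), (5/2, 5 * Real.sqrt 3 / 6), (0, 5 * Real.sqrt 3 / 3)} : Set (ℝ × ℝ)) with hH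
    have hA : ((0:ℝ),(0:ℝ)) ∈ H := subset_convexHull ℝ _ (by simp)
    have hB : ((5/2:ℝ), 5 * Real.sqrt 3 / 6) ∈ H := subset_convexHull ℝ _ (by simp)
    have hC : ((0:ℝ), 5 * Real.sqrt 3 / 3) ∈ H := subset_convexHull ℝ _ (by simp)
    have hconv : Convex ℝ H := convex_convexHull ℝ _
    by_cases hm : 2 * x / 5 + (Real.sqrt 3 * y - x) / 5 = 0
    · have hx0 : x = 0 := by linarith
      have hy0 : y = 0 := by
        have h32 : Real.sqrt 3 * y = 0 := by rw [hx0] at hm; linarith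
        rcases mul_eq_zero.1 h32 with h | h
        · exact absurd h (ne_of_gt h0)
        · exact h
      rw [hx0, hy0]; exact hA
    · set m : ℝ := 2 * x / 5 + (Real.sqrt 3 * y - x) / 5 with hmm
      have hmpos : 0 < m := lt_of_le_of_ne (by rw [hmm]; linarith) (Ne.symm hm)
      have hm' : m ≠ 0 := ne_of_gt hmpos
      have hz : ((2*x/5)/m) • ((5/2:ℝ), 5 * Real.sqrt 3 / 6)
          + (((Real.sqrt 3 * y - x)/5)/m) • ((0:ℝ), 5 * Real.sqrt 3 / 3) ∈ H :=
        hconv hB hC (by positivity) (by positivity) (by field_simp; rw [hmm]; ring)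
      have hmem := hconv hA hz hl1n (le_of_lt hmpos) (by rw [hmm]; ring)
      have hcanc : ∀ (B : ℝ×ℝ) (l : ℝ), m • ((l/m) • B) = l • B := by
        intro B l; rw [smul_smul, mul_div_cancel₀ _ hm']
      rw [smul_add, hcanc, hcanc] at hmem
      convert hmem using 1
      simp only [Prod.smul_mk, smul_eq_mul, Prod.mk_add_mk, Prod.ext_iff]
      exact ⟨by ring, by linear_combination (-(y/3)) * hs⟩

lemma Tclosed : IsClosed Tset := by
  have h1 : IsClosed {p : ℝ × ℝ | 0 ≤ p.1} := isClosed_le continuous_const continuous_fst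
  have h2 : IsClosed {p : ℝ × ℝ | sqrt 3 / 3 * p.1 ≤ p.2} :=
    isClosed_le (by fun_prop) continuous_snd
  have h3 : IsClosed {p : ℝ × ℝ | p.2 ≤ 5 * sqrt 3 / 3 - sqrt 3 / 3 * p.1} :=
    isClosed_le continuous_snd (by fun_prop)
  exact (h1.inter (h2.inter h3))

lemma Tcompact : IsCompact Tset := by
  rw [← hullEq]
  exact (Set.toFinite _).isCompact_convexHull ℝ

lemma transfer (f : ℝ × ℝ → ℝ) (hf : Continuous f) :
    (∫ p in Tset, f p ∂volume) =
      ∫ x in (0:ℝ)..(5/2), (∫ y in (Real.sqrt 3 / 3 * x)..(5 * Real.sqrt 3 / 3 - Real.sqrt 3 / 3 * x), f (x, y)) := by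
  have h0 := hs0
  have hTm : MeasurableSet Tset := Tclosed.measurableSet
  have hInt : IntegrableOn f Tset volume := hf.continuousOn.integrableOn_compact Tcompact
  rw [← integral_indicator hTm]
  rw [MeasureTheory.Measure.volume_eq_prod ℝ ℝ] at hInt ⊢
  rw [MeasureTheory.integral_prod _ (hInt.integrable_indicator hTm)]
  have key : ∀ x : ℝ, (∫ y, Tset.indicator f (x, y)) =
      (Icc (0:ℝ) (5/2)).indicator
        (fun x => ∫ y in (Real.sqrt 3 / 3 * x)..(5 * Real.sqrt 3 / 3 - Real.sqrt 3 / 3 * x), f (x, y)) x := by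
    intro x
    by_cases hx : x ∈ Icc (0:ℝ) (5/2)
    · have hx0 := hx.1
      have hx2 := hx.2
      have hsec : ∀ y : ℝ, Tset.indicator f (x, y)
          = (Icc (Real.sqrt 3 / 3 * x) (5 * Real.sqrt 3 / 3 - Real.sqrt 3 / 3 * x)).indicator (fun y => f (x, y)) y := by
        intro y
        by_cases hy : y ∈ Icc (Real.sqrt 3 / 3 * x) (5 * Real.sqrt 3 / 3 - Real.sqrt 3 / 3 * x)
        · rw [indicator_of_mem hy, indicator_of_mem]
          exact ⟨hx0, hy.1, hy.2⟩
        · rw [indicator_of_notMem hy, indicator_of_notMem]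
          intro hmem
          exact hy ⟨hmem.2.1, hmem.2.2⟩
      rw [Set.indicator_of_mem hx]
      simp_rw [hsec]
      rw [integral_indicator measurableSet_Icc, integral_Icc_eq_integral_Ioc,
        ← intervalIntegral.integral_of_le (by nlinarith)]
    · rw [indicator_of_notMem hx]
      have : ∀ y : ℝ, Tset.indicator f (x, y) = 0 := by
        intro y
        apply indicator_of_notMem
        intro hmem
        obtain ⟨a, b, c⟩ := hmem
        simp only at a b c
        rw [mem_Icc, not_and_or, not_le, not_le] at hx
        rcases hx with hx | hx
        · exact absurd a (not_le.2 hx)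
        · nlinarith
      simp_rw [this, integral_zero]
  simp_rw [key]
  rw [integral_indicator measurableSet_Icc, integral_Icc_eq_integral_Ioc,
    ← intervalIntegral.integral_of_le (by norm_num)]

lemma valdens : (∫ p in Tset, dens p ∂volume) = 78125/18432 * Real.sqrt 3 := by
  have hs : Real.sqrt 3 ^ 2 = 3 := hs3
  rw [transfer dens (by unfold dens; fun_prop)]
  have e : ∀ x : ℝ, (∫ y in (Real.sqrt 3 / 3 * x)..(5 * Real.sqrt 3 / 3 - Real.sqrt 3 / 3 * x), dens (x, y)) =
      (0:ℝ) + (0:ℝ)*x + ((625/3888)*Real.sqrt 3^9)*x^2 + ((-625/3888)*Real.sqrt 3^9)*x^3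
      + ((-125/648)*Real.sqrt 3^5 + (125/1944)*Real.sqrt 3^9)*x^4
      + ((25/216)*Real.sqrt 3^5 + (-25/1944)*Real.sqrt 3^9)*x^5
      + ((5/48)*Real.sqrt 3 + (-5/216)*Real.sqrt 3^5 + (5/3888)*Real.sqrt 3^9)*x^6
      + ((-1/24)*Real.sqrt 3 + (1/324)*Real.sqrt 3^5 + (-1/9720)*Real.sqrt 3^9)*x^7
      + (0:ℝ)*x^8 := by
    intro x
    rw [show (fun y => dens (x, y)) = fun y : ℝ =>
        (x^6/16) + (0:ℝ)*y + (-(Real.sqrt 3^2*x^4/8))*y^2 + (0:ℝ)*y^3 + (Real.sqrt 3^4*x^2/16)*y^4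
          + (0:ℝ)*y^5 + (0:ℝ)*y^6 + (0:ℝ)*y^7 + (0:ℝ)*y^8 from funext fun y => by
        simp only [dens]; ring]
    rw [ipoly]
    ring
  simp_rw [e]
  rw [ipoly]
  linear_combination ((3203125/3096576)*Real.sqrt 3 + (3203125/9289728)*Real.sqrt 3^3
    + (859375/3096576)*Real.sqrt 3^5 + (859375/9289728)*Real.sqrt 3^7) * hs

lemma valfx : (∫ p in Tset, dens p * p.1 ∂volume) = 390625/82944 * Real.sqrt 3 := by
  have hs : Real.sqrt 3 ^ 2 = 3 := hs3
  rw [transfer (fun p => dens p * p.1) (by unfold dens; fun_prop)]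
  have e : ∀ x : ℝ, (∫ y in (Real.sqrt 3 / 3 * x)..(5 * Real.sqrt 3 / 3 - Real.sqrt 3 / 3 * x), dens (x, y) * x) =
      (0:ℝ) + (0:ℝ)*x + (0:ℝ)*x^2 + ((625/3888)*Real.sqrt 3^9)*x^3 + ((-625/3888)*Real.sqrt 3^9)*x^4
      + ((-125/648)*Real.sqrt 3^5 + (125/1944)*Real.sqrt 3^9)*x^5
      + ((25/216)*Real.sqrt 3^5 + (-25/1944)*Real.sqrt 3^9)*x^6
      + ((5/48)*Real.sqrt 3 + (-5/216)*Real.sqrt 3^5 + (5/3888)*Real.sqrt 3^9)*x^7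
      + ((-1/24)*Real.sqrt 3 + (1/324)*Real.sqrt 3^5 + (-1/9720)*Real.sqrt 3^9)*x^8 := by
    intro x
    rw [show (fun y => dens (x, y) * x) = fun y : ℝ =>
        (x^7/16) + (0:ℝ)*y + (-(Real.sqrt 3^2*x^5/8))*y^2 + (0:ℝ)*y^3 + (Real.sqrt 3^4*x^3/16)*y^4
          + (0:ℝ)*y^5 + (0:ℝ)*y^6 + (0:ℝ)*y^7 + (0:ℝ)*y^8 from funext fun y => by
        simp only [dens]; ring]
    rw [ipoly]
    ring
  simp_rw [e]
  rw [ipoly]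
  linear_combination ((6640625/7962624)*Real.sqrt 3 + (6640625/23887872)*Real.sqrt 3^3
    + (63671875/167215104)*Real.sqrt 3^5 + (63671875/501645312)*Real.sqrt 3^7) * hs

lemma valfy : (∫ p in Tset, dens p * p.2 ∂volume) = 390625/27648 := by
  have hs : Real.sqrt 3 ^ 2 = 3 := hs3
  rw [transfer (fun p => dens p * p.2) (by unfold dens; fun_prop)]
  have e : ∀ x : ℝ, (∫ y in (Real.sqrt 3 / 3 * x)..(5 * Real.sqrt 3 / 3 - Real.sqrt 3 / 3 * x), dens (x, y) * y) =
      (0:ℝ) + (0:ℝ)*x + ((15625/69984)*Real.sqrt 3^10)*x^2 + ((-3125/11664)*Real.sqrt 3^10)*x^3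
      + ((-625/2592)*Real.sqrt 3^6 + (3125/23328)*Real.sqrt 3^10)*x^4
      + ((125/648)*Real.sqrt 3^6 + (-625/17496)*Real.sqrt 3^10)*x^5
      + ((25/288)*Real.sqrt 3^2 + (-25/432)*Real.sqrt 3^6 + (125/23328)*Real.sqrt 3^10)*x^6
      + ((-5/144)*Real.sqrt 3^2 + (5/648)*Real.sqrt 3^6 + (-5/11664)*Real.sqrt 3^10)*x^7
      + (0:ℝ)*x^8 := by
    intro x
    rw [show (fun y => dens (x, y) * y) = fun y : ℝ =>
        (0:ℝ) + (x^6/16)*y + (0:ℝ)*y^2 + (-(Real.sqrt 3^2*x^4/8))*y^3 + (0:ℝ)*y^4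
          + (Real.sqrt 3^4*x^2/16)*y^5 + (0:ℝ)*y^6 + (0:ℝ)*y^7 + (0:ℝ)*y^8 from funext fun y => by
        simp only [dens]; ring]
    rw [ipoly]
    ring
  simp_rw [e]
  rw [ipoly]
  linear_combination ((390625/82944) + (69921875/55738368)*Real.sqrt 3^2
    + (69921875/167215104)*Real.sqrt 3^4 + (142578125/501645312)*Real.sqrt 3^6
    + (142578125/1504935936)*Real.sqrt 3^8) * hs

theorem stmt :
    (∫ p in (convexHull ℝ {((0:ℝ), (0:ℝ)), (5/2, 5 * Real.sqrt 3 / 6), (0, 5 * Real.sqrt 3 / 3)} : Set (ℝ × ℝ)), dens p ∂volume)⁻¹ •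
      (∫ p in (convexHull ℝ {((0:ℝ), (0:ℝ)), (5/2, 5 * Real.sqrt 3 / 6), (0, 5 * Real.sqrt 3 / 3)} : Set (ℝ × ℝ)), dens p • p ∂volume) = ((10/9 : ℝ), (10 * Real.sqrt 3 / 9 : ℝ)) := by
  have hs : Real.sqrt 3 ^ 2 = 3 := hs3
  have h0 : (0:ℝ) < Real.sqrt 3 := hs0
  rw [hullEq]
  have hc : Continuous dens := by unfold dens; fun_prop
  have hint1 : IntegrableOn (fun p : ℝ × ℝ => dens p * p.1) Tset volume :=
    (Continuous.continuousOn (by fun_prop)).integrableOn_compact Tcompact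
  have hint2 : IntegrableOn (fun p : ℝ × ℝ => dens p * p.2) Tset volume :=
    (Continuous.continuousOn (by fun_prop)).integrableOn_compact Tcompact
  have hvec : (∫ p in Tset, dens p • p ∂volume)
      = (∫ p in Tset, dens p * p.1 ∂volume, ∫ p in Tset, dens p * p.2 ∂volume) := by
    have : ∀ p : ℝ × ℝ, dens p • p = (dens p * p.1, dens p * p.2) := by
      intro p; simp [Prod.smul_def, smul_eq_mul]
    simp_rw [this]
    exact integral_pair hint1 hint2
  rw [hvec, valdens, valfx, valfy]
  have hM : (78125/18432 * Real.sqrt 3 : ℝ) ≠ 0 := by positivity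
  rw [Prod.smul_mk, smul_eq_mul, smul_eq_mul, Prod.mk.injEq]
  constructor
  · rw [inv_mul_eq_div, div_eq_iff hM]; ring
  · rw [inv_mul_eq_div, div_eq_iff hM]
    linear_combination (-781250/165888 : ℝ) * hs
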